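/- Let Φ be one of the symbols Ω, Γ and Ψ one of the symbols 𝒪, Ω, Γ, with the couple ⟨Φ,Ψ⟩ different from ⟨Ω,𝒪⟩, and let X be an infinite Hausdorff topological space. Then X is an S_fin(Φ,Ψ)-space if and only if for every h ∈ USC*_p(X) the family USC*_p(X) satisfies the selection principle S_fin(Φ_h,Ψ_h). If moreover X possesses property (ε), the equivalence holds also for the couple ⟨Ω,𝒪⟩. -/
import Mathlib


open Set Filter Topology

namespace Selectors

variable {X : Type*}

/-- Kinds of covers / of pointwise properties: `o` (ordinary covers / 𝒪),
`omega` (ω-covers / Ω), `gamma` (γ-covers / Γ). -/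
inductive CoverKind : Type
  | o | omega | gamma

/-- `f` is a bounded upper semicontinuous real function on `X`. -/
def IsUSCb [TopologicalSpace X] (f : X → ℝ) : Prop :=
  (∀ a : ℝ, IsOpen {x | f x < a}) ∧ ∃ M : ℝ, ∀ x, |f x| ≤ M

/-- `USC*_p(X)`: the set of bounded upper semicontinuous real functions on `X`,
regarded as a subset of `X → ℝ` with the product (pointwise convergence) topology. -/
def USCb (X : Type*) [TopologicalSpace X] : Set (X → ℝ) := {f | IsUSCb f}

/-- `C*_p(X)`: the set of bounded continuous real functions on `X`. -/
def Cb (X : Type*) [TopologicalSpace X] : Set (X → ℝ) :=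
  {f | Continuous f ∧ ∃ M : ℝ, ∀ x, |f x| ≤ M}

/-- `𝒰` is a cover of `X`. -/
def IsCover (𝒰 : Set (Set X)) : Prop := ∀ x : X, ∃ U ∈ 𝒰, x ∈ U

/-- The (not necessarily open) cover condition of the given kind:
an `o`-cover is a cover; an ω-cover is a cover not containing `X` such that every
finite subset of `X` is contained in a member; a γ-cover is an infinite cover such
that each point belongs to all but finitely many members. -/
def kindSets (k : CoverKind) (𝒰 : Set (Set X)) : Prop :=
  match k with
  | .o => IsCover 𝒰
  | .omega => IsCover 𝒰 ∧ Set.univ ∉ 𝒰 ∧ ∀ F : Set X, F.Finite → ∃ U ∈ 𝒰, F ⊆ U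
  | .gamma => IsCover 𝒰 ∧ 𝒰.Infinite ∧ ∀ x : X, {U ∈ 𝒰 | x ∉ U}.Finite

/-- The family `𝒪(X)`, `Ω(X)` or `Γ(X)` of open covers/ω-covers/γ-covers of `X`. -/
def OpenKindCovers (X : Type*) [TopologicalSpace X] (k : CoverKind) : Set (Set (Set X)) :=
  {𝒰 | (∀ U ∈ 𝒰, IsOpen U) ∧ kindSets k 𝒰}

/-- The selection principle `S₁(A, B)`. -/
def S1 {α : Type*} (A B : Set (Set α)) : Prop :=
  ∀ u : ℕ → Set α, (∀ n, u n ∈ A) →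
    ∃ sel : ℕ → α, (∀ n, sel n ∈ u n) ∧ Set.range sel ∈ B

/-- The selection principle `S_fin(A, B)`. -/
def Sfin {α : Type*} (A B : Set (Set α)) : Prop :=
  ∀ u : ℕ → Set α, (∀ n, u n ∈ A) →
    ∃ V : ℕ → Set α, (∀ n, V n ⊆ u n ∧ (V n).Finite) ∧ (⋃ n, V n) ∈ B

/-- Property `(𝒪_h)` of a family `F` of real functions. -/
def PropO (h : X → ℝ) (F : Set (X → ℝ)) : Prop :=
  ∀ x : X, h x ∈ closure ((fun f : X → ℝ => f x) '' F)

/-- Property `(Ω_h)`: `h ∉ F` and `h` belongs to the closure of `F` in `ℝ^X`. -/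
def PropOmega (h : X → ℝ) (F : Set (X → ℝ)) : Prop :=
  h ∉ F ∧ h ∈ closure F

/-- Property `(Γ_h)`. -/
def PropGamma (h : X → ℝ) (F : Set (X → ℝ)) : Prop :=
  F.Infinite ∧ ∀ ε : ℝ, 0 < ε → ∀ x : X, {f ∈ F | ε ≤ |f x - h x|}.Finite

/-- Property `(Φ_h)` for `Φ = 𝒪, Ω, Γ`. -/
def kindProp (k : CoverKind) (h : X → ℝ) (F : Set (X → ℝ)) : Prop :=
  match k with
  | .o => PropO h F
  | .omega => PropOmega h F
  | .gamma => PropGamma h F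

/-- The family `Φ_h(H) = {F ⊆ H : F has (Φ_h) and ∀ f ∈ F, f ≥ h ∧ f - h ∈ H}`. -/
def PhiH (k : CoverKind) (h : X → ℝ) (H : Set (X → ℝ)) : Set (Set (X → ℝ)) :=
  {F | F ⊆ H ∧ kindProp k h F ∧ ∀ f ∈ F, h ≤ f ∧ f - h ∈ H}

/-- `F ⊆ H` is sequentially dense in `H` (with respect to pointwise convergence). -/
def SeqDenseIn (F H : Set (X → ℝ)) : Prop :=
  F ⊆ H ∧ ∀ f ∈ H, ∃ u : ℕ → (X → ℝ), (∀ n, u n ∈ F) ∧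
    Filter.Tendsto u Filter.atTop (nhds f)

/-- `F ⊆ H` is dense in `H`. -/
def DenseIn (F H : Set (X → ℝ)) : Prop :=
  F ⊆ H ∧ H ⊆ closure F

/-- `F` is pointwise dense: `{f x : f ∈ F}` is dense in `ℝ` for every `x`. -/
def PointwiseDense (F : Set (X → ℝ)) : Prop :=
  ∀ x : X, Dense {y : ℝ | ∃ f ∈ F, f x = y}

/-- `F ⊆ H` is upper sequentially dense in `H`. -/
def UpperSeqDenseIn (F H : Set (X → ℝ)) : Prop :=
  F ⊆ H ∧ ∀ f ∈ H, ∃ u : ℕ → (X → ℝ),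
    (∀ n, u n ∈ F ∧ f ≤ u n ∧ u n - f ∈ H) ∧
    Filter.Tendsto u Filter.atTop (nhds f)

/-- `F ⊆ H` is upper dense in `H`: for every `f ∈ H` the set
`{h ∈ F : h ≥ f ∧ h - f ∈ H}` is dense in `{h ∈ H : h ≥ f}`. -/
def UpperDenseIn (F H : Set (X → ℝ)) : Prop :=
  F ⊆ H ∧ ∀ f ∈ H, {g | g ∈ H ∧ f ≤ g} ⊆ closure {g | g ∈ F ∧ f ≤ g ∧ g - f ∈ H}

/-- `𝒮(H)`: the family of sequentially dense subsets of `H`. -/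
def Sfam (H : Set (X → ℝ)) : Set (Set (X → ℝ)) := {F | SeqDenseIn F H}

/-- `𝒟(H)`: the family of dense subsets of `H`. -/
def Dfam (H : Set (X → ℝ)) : Set (Set (X → ℝ)) := {F | DenseIn F H}

/-- `𝒫(H)`: the family of pointwise dense subsets of `H`. -/
def Pfam (H : Set (X → ℝ)) : Set (Set (X → ℝ)) := {F | F ⊆ H ∧ PointwiseDense F}

/-- `Φ̃↑(H)`: for `Φ = Γ` the upper sequentially dense subsets, for `Φ = Ω`
the upper dense subsets, for `Φ = 𝒪` the pointwise dense subsets of `H`. -/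
def upTilde (k : CoverKind) (H : Set (X → ℝ)) : Set (Set (X → ℝ)) :=
  match k with
  | .o => Pfam H
  | .omega => {F | UpperDenseIn F H}
  | .gamma => {F | UpperSeqDenseIn F H}

/-- `H` is separable: it has a countable dense subset. -/
def SeparableSet (H : Set (X → ℝ)) : Prop := ∃ D, D.Countable ∧ DenseIn D H

/-- `H` is sequentially separable: it has a countable sequentially dense subset. -/
def SeqSeparableSet (H : Set (X → ℝ)) : Prop := ∃ D, D.Countable ∧ SeqDenseIn D H

/-- Property `(ε)`: every open ω-cover contains a countable ω-subcover. -/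
def PropEps (X : Type*) [TopologicalSpace X] : Prop :=
  ∀ 𝒰 : Set (Set X), 𝒰 ∈ OpenKindCovers X CoverKind.omega →
    ∃ 𝒱 ⊆ 𝒰, 𝒱.Countable ∧ 𝒱 ∈ OpenKindCovers X CoverKind.omega

/-- `S` is an `F_σ` set with respect to the topology `t`. -/
def IsFsigmaIn (t : TopologicalSpace X) (S : Set X) : Prop :=
  ∃ C : ℕ → Set X, (∀ n, IsClosed[t] (C n)) ∧ S = ⋃ n, C n

/-- `S` is locally closed with respect to `t`: an intersection of a `t`-open
and a `t`-closed set. -/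
def IsLocallyClosedIn (t : TopologicalSpace X) (S : Set X) : Prop :=
  ∃ U F : Set X, IsOpen[t] U ∧ IsClosed[t] F ∧ S = U ∩ F

/-- `S` is a cozero set with respect to `t`. -/
def IsCozeroIn (t : TopologicalSpace X) (S : Set X) : Prop :=
  ∃ f : X → ℝ, @Continuous X ℝ t inferInstance f ∧ S = {x | f x ≠ 0}

/-- The `OB`-property of `⟨X, t⟩`: there is a separable metrizable topology `t'`
on `X` weaker than `t` such that every locally closed subset of `⟨X, t⟩` is an
`F_σ`-set in `t'`. -/
def OBProperty (X : Type*) [t : TopologicalSpace X] : Prop :=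
  ∃ t' : TopologicalSpace X,
    (∀ s : Set X, IsOpen[t'] s → IsOpen[t] s) ∧
    @TopologicalSpace.MetrizableSpace X t' ∧
    @TopologicalSpace.SeparableSpace X t' ∧
    ∀ S : Set X, IsLocallyClosedIn t S → IsFsigmaIn t' S

/-- The `V`-property of `⟨X, t⟩`: there is a separable metrizable topology `t'`
on `X` weaker than `t` such that every cozero subset of `⟨X, t⟩` is an
`F_σ`-set in `t'`. -/
def VProperty (X : Type*) [t : TopologicalSpace X] : Prop :=
  ∃ t' : TopologicalSpace X,
    (∀ s : Set X, IsOpen[t'] s → IsOpen[t] s) ∧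
    @TopologicalSpace.MetrizableSpace X t' ∧
    @TopologicalSpace.SeparableSpace X t' ∧
    ∀ S : Set X, IsCozeroIn t S → IsFsigmaIn t' S

/-- `iw(X) = ℵ₀`: `X` can be mapped by a one-to-one continuous map onto a
Tychonoff space of countable weight. -/
def IWCountable (X : Type*) [TopologicalSpace X] : Prop :=
  ∃ (Y : Type) (tY : TopologicalSpace Y) (f : X → Y),
    @Continuous X Y _ tY f ∧ Function.Bijective f ∧
    @T35Space Y tY ∧ @SecondCountableTopology Y tY

/-- `Φ^sh(X)`: the family of open shrinkable φ-covers of `X`. -/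
def ShFam (X : Type*) [TopologicalSpace X] (k : CoverKind) : Set (Set (Set X)) :=
  {𝒰 | 𝒰 ∈ OpenKindCovers X k ∧
    ∃ 𝒲 ∈ OpenKindCovers X k, ∀ W ∈ 𝒲, ∃ U ∈ 𝒰, closure W ⊆ U}

/-- A zero set. -/
def IsZeroSet [TopologicalSpace X] (S : Set X) : Prop :=
  ∃ f : X → ℝ, Continuous f ∧ S = {x | f x = 0}

/-- A cozero set. -/
def IsCozeroSet [TopologicalSpace X] (S : Set X) : Prop :=
  ∃ f : X → ℝ, Continuous f ∧ S = {x | f x ≠ 0}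

/-- `Φ^fsh_cz(X)`: the family of functionally shrinkable φ-covers of `X`
consisting of cozero sets. -/
def FshCzFam (X : Type*) [TopologicalSpace X] (k : CoverKind) : Set (Set (Set X)) :=
  {𝒰 | (∀ U ∈ 𝒰, IsCozeroSet U) ∧ kindSets k 𝒰 ∧
    ∃ 𝒲 : Set (Set X), (∀ W ∈ 𝒲, IsZeroSet W) ∧ kindSets k 𝒲 ∧
      ∀ W ∈ 𝒲, ∃ U ∈ 𝒰, closure W ⊆ U}

/-- The function `f_{U,g}`: equal to `0` on `U` and to `1 + sup |g|` off `U`. -/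
noncomputable def fU (U : Set X) (g : X → ℝ) : X → ℝ :=
  Uᶜ.indicator fun _ => 1 + ⨆ y, |g y|

/-- The family `S(𝒰) = {f_{U,g} + g : U ∈ 𝒰, g ∈ USC*_p(X)}`. -/
def SU [TopologicalSpace X] (𝒰 : Set (Set X)) : Set (X → ℝ) :=
  {f | ∃ U ∈ 𝒰, ∃ g ∈ USCb X, f = fU U g + g}

/-- The Sorgenfrey topology on `ℝ`, generated by the half-open intervals `[a, b)`. -/
def sorgenfreyTop : TopologicalSpace ℝ :=
  TopologicalSpace.generateFrom {s | ∃ a b : ℝ, s = Set.Ico a b}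

/-- The Sorgenfrey plane topology on `ℝ × ℝ`. -/
def sorgenfreyPlaneTop : TopologicalSpace (ℝ × ℝ) :=
  @instTopologicalSpaceProd ℝ ℝ sorgenfreyTop sorgenfreyTop


noncomputable def indOne (U : Set X) : X → ℝ := Uᶜ.indicator fun _ => 1

lemma indOne_of_mem {U : Set X} {x : X} (hx : x ∈ U) : indOne U x = 0 := by
  simp [indOne, Set.indicator_apply, hx]

lemma indOne_of_notMem {U : Set X} {x : X} (hx : x ∉ U) : indOne U x = 1 := by
  simp [indOne, Set.indicator_apply, hx]

lemma indOne_nonneg (U : Set X) (x : X) : 0 ≤ indOne U x := by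
  by_cases hx : x ∈ U
  · rw [indOne_of_mem hx]
  · rw [indOne_of_notMem hx]; norm_num

lemma indOne_eq_zero_iff {U : Set X} {x : X} : indOne U x = 0 ↔ x ∈ U := by
  constructor
  · intro h
    by_contra hx
    rw [indOne_of_notMem hx] at h; norm_num at h
  · exact indOne_of_mem

lemma indOne_inj : Function.Injective (indOne : Set X → X → ℝ) := by
  intro U V hUV
  ext x
  rw [← indOne_eq_zero_iff (U := U), ← indOne_eq_zero_iff (U := V), hUV]

lemma indOne_usc [TopologicalSpace X] {U : Set X} (hU : IsOpen U) : indOne U ∈ USCb X := by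
  constructor
  · intro a
    rcases le_or_gt a 0 with h0 | h0
    · convert isOpen_empty
      ext x; simp only [Set.mem_setOf_eq, Set.mem_empty_iff_false, iff_false, not_lt]
      exact le_trans h0 (indOne_nonneg U x)
    · rcases le_or_gt a 1 with h1 | h1
      · convert hU
        ext x; simp only [Set.mem_setOf_eq]
        constructor
        · intro hx
          by_contra hxU
          rw [indOne_of_notMem hxU] at hx; linarith
        · intro hx; rw [indOne_of_mem hx]; exact h0
      · convert isOpen_univ
        ext x; simp only [Set.mem_setOf_eq, Set.mem_univ, iff_true]
        by_cases hx : x ∈ U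
        · rw [indOne_of_mem hx]; linarith
        · rw [indOne_of_notMem hx]; linarith
  · exact ⟨1, fun x => by
      by_cases hx : x ∈ U
      · rw [indOne_of_mem hx]; norm_num
      · rw [indOne_of_notMem hx]; norm_num⟩

lemma zero_mem_USCb [TopologicalSpace X] : (0 : X → ℝ) ∈ USCb X := by
  constructor
  · intro a
    rcases le_or_gt a 0 with h0 | h0
    · convert isOpen_empty
      ext x; simp only [Pi.zero_apply, Set.mem_setOf_eq, Set.mem_empty_iff_false, iff_false,
        not_lt]
      exact h0
    · convert isOpen_univ
      ext x; simpa using h0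
  · exact ⟨0, fun x => by simp⟩

/-- Extraction from closure in the product topology. -/
lemma of_mem_closure_pi [TopologicalSpace X] {F : Set (X → ℝ)} {h : X → ℝ}
    (hc : h ∈ closure F) (A : Finset X) {ε : ℝ} (hε : 0 < ε) :
    ∃ f ∈ F, ∀ x ∈ A, |f x - h x| < ε := by
  have hopen : IsOpen {g : X → ℝ | ∀ x ∈ A, |g x - h x| < ε} := by
    have : {g : X → ℝ | ∀ x ∈ A, |g x - h x| < ε}
        = ⋂ x ∈ A, (fun g : X → ℝ => g x) ⁻¹' Metric.ball (h x) ε := by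
      ext g; simp [Real.dist_eq]
    rw [this]
    exact isOpen_biInter_finset fun x _ => (Metric.isOpen_ball).preimage (continuous_apply x)
  have hmem : h ∈ {g : X → ℝ | ∀ x ∈ A, |g x - h x| < ε} := by
    intro x _; simpa using hε
  rcases (mem_closure_iff.mp hc) _ hopen hmem with ⟨f, hfO, hfF⟩
  exact ⟨f, hfF, hfO⟩

/-- Membership in closure in the product topology from finite approximations. -/
lemma mem_closure_pi_of [TopologicalSpace X] {F : Set (X → ℝ)} {h : X → ℝ}
    (hyp : ∀ A : Finset X, ∀ ε : ℝ, 0 < ε → ∃ f ∈ F, ∀ x ∈ A, |f x - h x| < ε) :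
    h ∈ closure F := by
  rw [mem_closure_iff_nhds]
  intro t ht
  rw [nhds_pi, Filter.mem_pi] at ht
  obtain ⟨I, hIfin, tt, htt, hsub⟩ := ht
  have h2 : ∀ i : X, ∃ δ : ℝ, 0 < δ ∧ (i ∈ I → Metric.ball (h i) δ ⊆ tt i) := by
    intro i
    by_cases hi : i ∈ I
    · obtain ⟨δ, hδpos, hδ⟩ := Metric.mem_nhds_iff.mp (htt i)
      exact ⟨δ, hδpos, fun _ => hδ⟩
    · exact ⟨1, one_pos, fun h' => absurd h' hi⟩
  choose δf hδpos hδsub using h2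
  set A := hIfin.toFinset with hA
  rcases A.eq_empty_or_nonempty with hAe | hAne
  · obtain ⟨f, hfF, _⟩ := hyp ∅ 1 one_pos
    refine ⟨f, ?_, hfF⟩
    apply hsub
    intro i hi
    exfalso
    have : i ∈ A := by simp [hA, hi]
    simp [hAe] at this
  · set ε := A.inf' hAne δf with hε
    have hεpos : 0 < ε := by
      rw [hε, Finset.lt_inf'_iff]
      intro i _; exact hδpos i
    obtain ⟨f, hfF, hfA⟩ := hyp A ε hεpos
    refine ⟨f, ?_, hfF⟩
    apply hsub
    intro i hi
    have hiA : i ∈ A := by simp [hA, hi]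
    apply hδsub i hi
    rw [Metric.mem_ball, Real.dist_eq]
    exact lt_of_lt_of_le (hfA i hiA) (Finset.inf'_le _ hiA)


section MPR

variable [TopologicalSpace X]

lemma mpr_lemma (Φ Ψ : CoverKind)
    (hΦ : Φ = CoverKind.omega ∨ Φ = CoverKind.gamma)
    (hyp : ∀ h ∈ USCb X, Sfin (PhiH Φ h (USCb X)) (PhiH Ψ h (USCb X))) :
    Sfin (OpenKindCovers X Φ) (OpenKindCovers X Ψ) := by
  intro u hu
  set F : ℕ → Set (X → ℝ) := fun n => indOne '' (u n) with hF
  have hFmem : ∀ n, F n ∈ PhiH Φ (0 : X → ℝ) (USCb X) := by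
    intro n
    obtain ⟨hopen, hkind⟩ := hu n
    refine ⟨?_, ?_, ?_⟩
    · rintro f ⟨U, hU, rfl⟩; exact indOne_usc (hopen U hU)
    · cases hΦ with
      | inl hΦo =>
        subst hΦo
        obtain ⟨hcov, hnuniv, homega⟩ := hkind
        constructor
        · rintro ⟨U, hU, hU0⟩
          apply hnuniv
          have hUuniv : U = Set.univ := by
            ext x; simp only [Set.mem_univ, iff_true]
            rw [← indOne_eq_zero_iff (U := U)]
            have := congrFun hU0 x
            simpa using this
          rwa [hUuniv] at hU
        · apply mem_closure_pi_of
          intro A ε hε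
          obtain ⟨U, hU, hAU⟩ := homega A (A.finite_toSet)
          refine ⟨indOne U, ⟨U, hU, rfl⟩, fun x hx => ?_⟩
          rw [indOne_of_mem (hAU hx)]
          simpa using hε
      | inr hΦg =>
        subst hΦg
        obtain ⟨hcov, hinf, hfin⟩ := hkind
        refine ⟨hinf.image (indOne_inj.injOn), ?_⟩
        intro ε hε x
        have hsubset : {f ∈ F n | ε ≤ |f x - (0 : X → ℝ) x|} ⊆ indOne '' {U ∈ u n | x ∉ U} := by
          rintro f ⟨⟨U, hU, rfl⟩, hfx⟩
          refine ⟨U, ⟨hU, ?_⟩, rfl⟩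
          intro hxU
          rw [indOne_of_mem hxU] at hfx
          simp at hfx
          linarith
        exact ((hfin x).image _).subset hsubset
    · rintro f ⟨U, hU, rfl⟩
      refine ⟨fun x => indOne_nonneg U x, ?_⟩
      rw [sub_zero]; exact indOne_usc (hopen U hU)
  obtain ⟨V, hVsub, hVmem⟩ := hyp 0 zero_mem_USCb F hFmem
  set 𝒱 : ℕ → Set (Set X) := fun n => {U | U ∈ u n ∧ indOne U ∈ V n} with h𝒱
  have hVF : ∀ n, V n ⊆ F n := fun n => (hVsub n).1
  have key : ∀ f ∈ ⋃ n, V n, ∃ U, U ∈ ⋃ n, 𝒱 n ∧ f = indOne U := by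
    intro f hf
    rcases Set.mem_iUnion.mp hf with ⟨n, hfn⟩
    rcases hVF n hfn with ⟨U, hU, rfl⟩
    exact ⟨U, Set.mem_iUnion.mpr ⟨n, hU, hfn⟩, rfl⟩
  refine ⟨𝒱, ?_, ?_⟩
  · intro n
    refine ⟨fun U hU => hU.1, ?_⟩
    have hsub : 𝒱 n ⊆ indOne ⁻¹' (V n) := fun U hU => hU.2
    exact (((hVsub n).2).preimage (indOne_inj.injOn)).subset hsub
  · obtain ⟨hVusc, hVkind, hVge⟩ := hVmem
    have hopen𝒱 : ∀ U ∈ ⋃ n, 𝒱 n, IsOpen U := by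
      intro U hU
      rcases Set.mem_iUnion.mp hU with ⟨n, hUn⟩
      exact (hu n).1 U hUn.1
    refine ⟨hopen𝒱, ?_⟩
    cases Ψ with
    | o =>
      intro x
      have hx := hVkind x
      rcases Metric.mem_closure_iff.mp hx (1/2) (by norm_num) with ⟨b, ⟨f, hfV, rfl⟩, hdist⟩
      rcases key f hfV with ⟨U, hU𝒱, rfl⟩
      refine ⟨U, hU𝒱, ?_⟩
      by_contra hxU
      simp [Real.dist_eq, indOne_of_notMem hxU] at hdist
      norm_num at hdist
    | omega =>
      obtain ⟨h0notin, hclos⟩ := hVkind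
      have homega : ∀ A : Set X, A.Finite → ∃ U ∈ ⋃ n, 𝒱 n, A ⊆ U := by
        intro A hA
        obtain ⟨f, hfV, hfA⟩ := of_mem_closure_pi hclos hA.toFinset (ε := 1/2) (by norm_num)
        rcases key f hfV with ⟨U, hU𝒱, rfl⟩
        refine ⟨U, hU𝒱, fun x hx => ?_⟩
        have hx' : x ∈ hA.toFinset := hA.mem_toFinset.mpr hx
        have := hfA x hx'
        by_contra hxU
        rw [indOne_of_notMem hxU] at this
        simp at this
        linarith
      refine ⟨fun x => ?_, ?_, homega⟩
      · obtain ⟨U, hU, hxU⟩ := homega {x} (Set.finite_singleton x)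
        exact ⟨U, hU, hxU rfl⟩
      · intro huniv
        rcases Set.mem_iUnion.mp huniv with ⟨n, hn⟩
        apply h0notin
        have : indOne (Set.univ : Set X) = (0 : X → ℝ) := by
          ext x; exact indOne_of_mem (Set.mem_univ x)
        have h2 := hn.2
        rw [this] at h2
        exact Set.mem_iUnion.mpr ⟨n, h2⟩
    | gamma =>
      obtain ⟨hinfV, hfinV⟩ := hVkind
      have hinf𝒱 : (⋃ n, 𝒱 n).Infinite := by
        intro hfin
        apply hinfV
        have hsub : (⋃ n, V n) ⊆ indOne '' (⋃ n, 𝒱 n) := by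
          intro f hf
          rcases key f hf with ⟨U, hU, rfl⟩
          exact ⟨U, hU, rfl⟩
        exact (hfin.image _).subset hsub
      have hfin𝒱 : ∀ x : X, {U | U ∈ ⋃ n, 𝒱 n ∧ x ∉ U}.Finite := by
        intro x
        have hsub : {U | U ∈ ⋃ n, 𝒱 n ∧ x ∉ U}
            ⊆ indOne ⁻¹' {f | f ∈ ⋃ n, V n ∧ (1:ℝ) ≤ |f x - (0 : X → ℝ) x|} := by
          rintro U ⟨hU, hxU⟩
          rcases Set.mem_iUnion.mp hU with ⟨n, hUn⟩
          refine ⟨Set.mem_iUnion.mpr ⟨n, hUn.2⟩, ?_⟩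
          rw [indOne_of_notMem hxU]
          simp
        exact ((hfinV 1 one_pos x).preimage (indOne_inj.injOn)).subset hsub
      refine ⟨fun x => ?_, hinf𝒱, hfin𝒱⟩
      obtain ⟨U, hU⟩ := (hinf𝒱.diff (hfin𝒱 x)).nonempty
      refine ⟨U, hU.1, ?_⟩
      by_contra hxU
      exact hU.2 ⟨hU.1, hxU⟩
end MPR


section MP

variable [TopologicalSpace X]

noncomputable def lvl (k : ℕ) : ℝ := 1 / (k + 1)

lemma lvl_pos (k : ℕ) : 0 < lvl k := by unfold lvl; positivity

lemma lvl_antitone {j k : ℕ} (hjk : j ≤ k) : lvl k ≤ lvl j := by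
  unfold lvl
  apply one_div_le_one_div_of_le
  · positivity
  · have : (j : ℝ) ≤ (k : ℝ) := by exact_mod_cast hjk
    linarith

lemma exists_lvl_lt {ε : ℝ} (hε : 0 < ε) : ∃ k : ℕ, lvl k < ε := by
  obtain ⟨k, hk⟩ := exists_nat_one_div_lt hε
  exact ⟨k, hk⟩

lemma lvl_bound {ε : ℝ} (hε : 0 < ε) {j : ℕ} (hj : ε < lvl j) : j < ⌈1/ε⌉₊ := by
  rw [Nat.lt_ceil]
  rw [lvl, lt_div_iff₀ (by positivity)] at hj
  rw [lt_div_iff₀ hε]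
  nlinarith

lemma nonpos_of_forall_lt_lvl {r : ℝ} (hr : ∀ k : ℕ, r < lvl k) : r ≤ 0 := by
  by_contra hc
  push_neg at hc
  obtain ⟨k, hk⟩ := exists_lvl_lt hc
  exact absurd (hr k) (not_lt.mpr hk.le)

/-- The open set `{x | f x - h x < 1/(k+1)}`. -/
def Uset (h f : X → ℝ) (k : ℕ) : Set X := {x | f x - h x < lvl k}

lemma mem_Uset {h f : X → ℝ} {k : ℕ} {x : X} : x ∈ Uset h f k ↔ f x - h x < lvl k := Iff.rfl

lemma Uset_open {h f : X → ℝ} (hfh : f - h ∈ USCb X) (k : ℕ) : IsOpen (Uset h f k) := by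
  exact hfh.1 (lvl k)

lemma source_cover (Φ : CoverKind) (hΦ : Φ = CoverKind.omega ∨ Φ = CoverKind.gamma)
    (h : X → ℝ) (Fn : Set (X → ℝ)) (hFn : Fn ∈ PhiH Φ h (USCb X)) (k : ℕ)
    (hP : ¬ ∃ f ∈ Fn \ {h}, ∀ x, f x - h x < lvl k) :
    {S | ∃ f ∈ Fn \ {h}, S = Uset h f k} ∈ OpenKindCovers X Φ := by
  obtain ⟨hsub, hkind, hge⟩ := hFn
  have hopen : ∀ S ∈ {S | ∃ f ∈ Fn \ {h}, S = Uset h f k}, IsOpen S := by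
    rintro S ⟨f, hf, rfl⟩
    exact Uset_open (hge f hf.1).2 k
  refine ⟨hopen, ?_⟩
  push_neg at hP
  cases hΦ with
  | inl h1 =>
    subst h1
    obtain ⟨hnot, hclos⟩ := hkind
    have homega : ∀ A : Set X, A.Finite →
        ∃ S ∈ {S | ∃ f ∈ Fn \ {h}, S = Uset h f k}, A ⊆ S := by
      intro A hA
      obtain ⟨f, hfF, hfA⟩ := of_mem_closure_pi hclos hA.toFinset (lvl_pos k)
      have hfne : f ≠ h := fun e => hnot (e ▸ hfF)
      refine ⟨Uset h f k, ⟨f, ⟨hfF, hfne⟩, rfl⟩, fun x hx => ?_⟩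
      have hx2 := hfA x (hA.mem_toFinset.mpr hx)
      rw [mem_Uset]
      exact lt_of_le_of_lt (le_abs_self _) hx2
    refine ⟨fun x => ?_, ?_, homega⟩
    · obtain ⟨S, hS, hxS⟩ := homega {x} (Set.finite_singleton x)
      exact ⟨S, hS, hxS rfl⟩
    · rintro ⟨f, hf, hfu⟩
      obtain ⟨x, hx⟩ := hP f hf
      have hxmem : x ∈ Uset h f k := by rw [← hfu]; exact Set.mem_univ x
      rw [mem_Uset] at hxmem
      exact absurd hxmem (not_lt.mpr hx)
  | inr h2 =>
    subst h2
    obtain ⟨hinf, hfin⟩ := hkind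
    have hGinf : (Fn \ {h}).Infinite := hinf.diff (Set.finite_singleton h)
    have habs : ∀ f ∈ Fn, ∀ x : X, f x - h x = |f x - h x| := fun f hf x =>
      (abs_of_nonneg (sub_nonneg.mpr ((hge f hf).1 x))).symm
    have hfin' : ∀ x : X, {f | f ∈ Fn \ {h} ∧ lvl k ≤ f x - h x}.Finite := by
      intro x
      apply (hfin (lvl k) (lvl_pos k) x).subset
      rintro f ⟨hf, hfx⟩
      exact ⟨hf.1, by rw [← habs f hf.1]; exact hfx⟩
    have hcov : IsCover {S | ∃ f ∈ Fn \ {h}, S = Uset h f k} := by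
      intro x
      obtain ⟨f, hf⟩ := (hGinf.diff (hfin' x)).nonempty
      refine ⟨Uset h f k, ⟨f, hf.1, rfl⟩, ?_⟩
      rw [mem_Uset]
      by_contra hc
      exact hf.2 ⟨hf.1, not_lt.mp hc⟩
    refine ⟨hcov, ?_, ?_⟩
    · intro hfinS
      by_cases hall : ∀ S ∈ {S | ∃ f ∈ Fn \ {h}, S = Uset h f k},
          {f | f ∈ Fn \ {h} ∧ Uset h f k = S}.Finite
      · apply hGinf
        apply Set.Finite.subset (hfinS.biUnion hall)
        intro f hf
        exact Set.mem_biUnion (⟨f, hf, rfl⟩ : _ ∈ {S | ∃ f ∈ Fn \ {h}, S = Uset h f k}) ⟨hf, rfl⟩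
      · push_neg at hall
        obtain ⟨S, hS, hSfib⟩ := hall
        obtain ⟨f0, hf0, rfl⟩ := hS
        obtain ⟨y, hy⟩ := hP f0 hf0
        apply hSfib
        apply (hfin' y).subset
        rintro f ⟨hf, hUf⟩
        refine ⟨hf, ?_⟩
        have hyS : y ∉ Uset h f k := by
          rw [hUf, mem_Uset]
          exact not_lt.mpr hy
        rw [mem_Uset] at hyS
        exact not_lt.mp hyS
    · intro x
      apply ((hfin' x).image (fun f => Uset h f k)).subset
      rintro S ⟨⟨f, hf, rfl⟩, hxS⟩
      rw [mem_Uset] at hxS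
      exact ⟨f, ⟨hf, not_lt.mp hxS⟩, rfl⟩

lemma levelA (Φ Ψ : CoverKind) (hΦ : Φ = CoverKind.omega ∨ Φ = CoverKind.gamma)
    (h : X → ℝ) (F : ℕ → Set (X → ℝ)) (hF : ∀ n, F n ∈ PhiH Φ h (USCb X))
    (hX : Sfin (OpenKindCovers X Φ) (OpenKindCovers X Ψ)) (k : ℕ) :
    ∃ W : ℕ → Set (X → ℝ), (∀ i, W i ⊆ F (Nat.pair k i) \ {h} ∧ (W i).Finite) ∧
      ((Ψ = CoverKind.o → ∀ x : X, ∃ f ∈ ⋃ i, W i, f x - h x < lvl k) ∧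
       (Ψ = CoverKind.omega →
          ∀ A : Finset X, ∃ f ∈ ⋃ i, W i, ∀ x ∈ A, f x - h x < lvl k)) := by
  by_cases hP : ∃ i, ∃ f ∈ F (Nat.pair k i) \ {h}, ∀ x, f x - h x < lvl k
  · obtain ⟨i0, f0, hf0, hf0lt⟩ := hP
    classical
    refine ⟨fun i => if i = i0 then {f0} else ∅, ?_, ?_, ?_⟩
    · intro i
      by_cases hi : i = i0
      · subst hi
        refine ⟨?_, by simp⟩
        intro f hf
        simp only [if_pos rfl, Set.mem_singleton_iff] at hf
        subst hf
        exact hf0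
      · simp [hi]
    · intro _ x
      exact ⟨f0, Set.mem_iUnion.mpr ⟨i0, by simp⟩, hf0lt x⟩
    · intro _ A
      exact ⟨f0, Set.mem_iUnion.mpr ⟨i0, by simp⟩, fun x _ => hf0lt x⟩
  · push_neg at hP
    set 𝒰 : ℕ → Set (Set X) :=
      fun i => {S | ∃ f ∈ F (Nat.pair k i) \ {h}, S = Uset h f k} with h𝒰def
    have h𝒰 : ∀ i, 𝒰 i ∈ OpenKindCovers X Φ := by
      intro i
      apply source_cover Φ hΦ h _ (hF _) k
      rintro ⟨f, hf, hflt⟩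
      obtain ⟨x, hx⟩ := hP i f hf
      exact absurd (hflt x) (not_lt.mpr hx)
    obtain ⟨𝒱, h𝒱sub, h𝒱mem⟩ := hX 𝒰 h𝒰
    have hch : ∀ i S, ∃ f, S ∈ 𝒱 i → (f ∈ F (Nat.pair k i) \ {h} ∧ S = Uset h f k) := by
      intro i S
      by_cases hS : S ∈ 𝒱 i
      · obtain ⟨f, hf, he⟩ := (h𝒱sub i).1 hS
        exact ⟨f, fun _ => ⟨hf, he⟩⟩
      · exact ⟨h, fun hc => absurd hc hS⟩
    choose fsel hsel using hch
    refine ⟨fun i => (fun S => fsel i S) '' 𝒱 i, ?_, ?_, ?_⟩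
    · intro i
      constructor
      · rintro f ⟨S, hS, rfl⟩
        exact (hsel i S hS).1
      · exact ((h𝒱sub i).2).image _
    · rintro rfl x
      obtain ⟨hopen, hcov⟩ := h𝒱mem
      obtain ⟨S, hS, hxS⟩ := hcov x
      rcases Set.mem_iUnion.mp hS with ⟨i, hSi⟩
      refine ⟨fsel i S, Set.mem_iUnion.mpr ⟨i, ⟨S, hSi, rfl⟩⟩, ?_⟩
      have he := (hsel i S hSi).2
      rw [he, mem_Uset] at hxS
      exact hxS
    · rintro rfl A
      obtain ⟨hopen, hcov, hnu, homega⟩ := h𝒱mem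
      obtain ⟨S, hS, hAS⟩ := homega A A.finite_toSet
      rcases Set.mem_iUnion.mp hS with ⟨i, hSi⟩
      refine ⟨fsel i S, Set.mem_iUnion.mpr ⟨i, ⟨S, hSi, rfl⟩⟩, fun x hx => ?_⟩
      have he := (hsel i S hSi).2
      have hxS : x ∈ S := hAS hx
      rw [he, mem_Uset] at hxS
      exact hxS

lemma mp_o_omega (Φ Ψ : CoverKind) (hΦ : Φ = CoverKind.omega ∨ Φ = CoverKind.gamma)
    (hΨ : Ψ = CoverKind.o ∨ Ψ = CoverKind.omega) (h : X → ℝ)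
    (hX : Sfin (OpenKindCovers X Φ) (OpenKindCovers X Ψ)) :
    Sfin (PhiH Φ h (USCb X)) (PhiH Ψ h (USCb X)) := by
  intro F hF
  have hlev := fun k => levelA Φ Ψ hΦ h F hF hX k
  choose W hWsub hWcov using hlev
  set V : ℕ → Set (X → ℝ) := fun n => W n.unpair.1 n.unpair.2 with hVdef
  have hVsub : ∀ n, V n ⊆ F n \ {h} := by
    intro n
    have h1 := (hWsub n.unpair.1 n.unpair.2).1
    rwa [Nat.pair_unpair] at h1
  have hVfin : ∀ n, (V n).Finite := fun n => (hWsub n.unpair.1 n.unpair.2).2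
  have hTmem : ∀ f ∈ ⋃ n, V n, f ∈ USCb X ∧ f ≠ h ∧ h ≤ f ∧ f - h ∈ USCb X := by
    intro f hf
    rcases Set.mem_iUnion.mp hf with ⟨n, hn⟩
    have h2 := hVsub n hn
    obtain ⟨hsub, _, hge⟩ := hF n
    exact ⟨hsub h2.1, h2.2, (hge f h2.1).1, (hge f h2.1).2⟩
  have hWT : ∀ k i, W k i ⊆ ⋃ n, V n := by
    intro k i f hf
    refine Set.mem_iUnion.mpr ⟨Nat.pair k i, ?_⟩
    show f ∈ W (Nat.pair k i).unpair.1 (Nat.pair k i).unpair.2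
    rw [Nat.unpair_pair]
    exact hf
  refine ⟨V, fun n => ⟨(hVsub n).trans Set.diff_subset, hVfin n⟩, ?_, ?_, ?_⟩
  · exact fun f hf => (hTmem f hf).1
  · -- kindProp Ψ
    cases hΨ with
    | inl h1 =>
      subst h1
      intro x
      rw [Metric.mem_closure_iff]
      intro ε hε
      obtain ⟨k, hk⟩ := exists_lvl_lt hε
      obtain ⟨f, hfW, hflt⟩ := (hWcov k).1 rfl x
      rcases Set.mem_iUnion.mp hfW with ⟨i, hfi⟩
      have hfT : f ∈ ⋃ n, V n := hWT k i hfi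
      refine ⟨f x, ⟨f, hfT, rfl⟩, ?_⟩
      rw [Real.dist_eq, abs_sub_comm,
        abs_of_nonneg (sub_nonneg.mpr ((hTmem f hfT).2.2.1 x))]
      exact lt_trans hflt hk
    | inr h2 =>
      subst h2
      constructor
      · intro hc
        exact (hTmem h hc).2.1 rfl
      · apply mem_closure_pi_of
        intro A ε hε
        obtain ⟨k, hk⟩ := exists_lvl_lt hε
        obtain ⟨f, hfW, hflt⟩ := (hWcov k).2 rfl A
        rcases Set.mem_iUnion.mp hfW with ⟨i, hfi⟩
        have hfT : f ∈ ⋃ n, V n := hWT k i hfi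
        refine ⟨f, hfT, fun x hx => ?_⟩
        rw [abs_of_nonneg (sub_nonneg.mpr ((hTmem f hfT).2.2.1 x))]
        exact lt_trans (hflt x hx) hk
  · exact fun f hf => ⟨(hTmem f hf).2.2.1, (hTmem f hf).2.2.2⟩

lemma mp_gamma (Φ : CoverKind) (hΦ : Φ = CoverKind.omega ∨ Φ = CoverKind.gamma) (h : X → ℝ)
    (hX : Sfin (OpenKindCovers X Φ) (OpenKindCovers X CoverKind.gamma)) :
    Sfin (PhiH Φ h (USCb X)) (PhiH CoverKind.gamma h (USCb X)) := by
  classical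
  intro F hF
  have hgeF : ∀ n, ∀ f ∈ F n, f ∈ USCb X ∧ h ≤ f ∧ f - h ∈ USCb X := by
    intro n f hf
    obtain ⟨hsub, _, hge⟩ := hF n
    exact ⟨hsub hf, (hge f hf).1, (hge f hf).2⟩
  by_cases hM : ∀ N, ∃ n, N ≤ n ∧ ∃ f, f ∈ F n \ {h} ∧ ∀ x, f x - h x < lvl n
  · have hM' : ∀ N, ∃ p : ℕ × (X → ℝ),
        N ≤ p.1 ∧ p.2 ∈ F p.1 \ {h} ∧ ∀ x, p.2 x - h x < lvl p.1 := by
      intro N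
      obtain ⟨n, hn, f, hf, hlt⟩ := hM N
      exact ⟨(n, f), hn, hf, hlt⟩
    choose p hge hmem hlt using hM'
    let a : ℕ → ℕ := fun j => Nat.rec 0 (fun _ aj => (p aj).1 + 1) j
    set s : ℕ → ℕ := fun j => (p (a j)).1 with hs
    set fs : ℕ → (X → ℝ) := fun j => (p (a j)).2 with hfs
    have ha_succ : ∀ j, a (j + 1) = s j + 1 := fun j => rfl
    have hsa : ∀ j, a j ≤ s j := fun j => hge (a j)
    have hsmono : StrictMono s := by
      apply strictMono_nat_of_lt_succ
      intro j
      calc s j < s j + 1 := Nat.lt_succ_self _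
      _ = a (j + 1) := (ha_succ j).symm
      _ ≤ s (j + 1) := hsa (j + 1)
    have hja : ∀ j, j ≤ a j := by
      intro j
      induction j with
      | zero => exact Nat.zero_le _
      | succ j ih =>
        have h1 : a j ≤ s j := hsa j
        have h2 := ha_succ j
        omega
    have hjs : ∀ j, j ≤ s j := fun j => le_trans (hja j) (hsa j)
    have hfs_mem : ∀ j, fs j ∈ F (s j) \ {h} := fun j => hmem (a j)
    have hfs_lt : ∀ j x, fs j x - h x < lvl (s j) := fun j x => hlt (a j) x
    set V : ℕ → Set (X → ℝ) := fun n => {f | ∃ j, s j = n ∧ f = fs j} with hV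
    have hVsub : ∀ n, V n ⊆ F n \ {h} := by
      rintro n f ⟨j, hj, rfl⟩
      rw [← hj]
      exact hfs_mem j
    have hVfin : ∀ n, (V n).Finite := by
      intro n
      apply Set.Subsingleton.finite
      rintro f1 ⟨j1, hj1, rfl⟩ f2 ⟨j2, hj2, rfl⟩
      have : j1 = j2 := hsmono.injective (hj1.trans hj2.symm)
      rw [this]
    have hTr : (⋃ n, V n) = Set.range fs := by
      apply Set.Subset.antisymm
      · rintro f hf
        rcases Set.mem_iUnion.mp hf with ⟨n, j, hj, rfl⟩
        exact ⟨j, rfl⟩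
      · rintro f ⟨j, rfl⟩
        exact Set.mem_iUnion.mpr ⟨s j, j, rfl, rfl⟩
    refine ⟨V, fun n => ⟨(hVsub n).trans Set.diff_subset, hVfin n⟩, ?_, ?_, ?_⟩
    · rw [hTr]
      rintro f ⟨j, rfl⟩
      exact (hgeF (s j) _ (hfs_mem j).1).1
    · rw [hTr]
      constructor
      · intro hfin
        haveI : Finite ↥(Set.range fs) := hfin.to_subtype
        obtain ⟨y, hy⟩ := Finite.exists_infinite_fiber (Set.rangeFactorization fs)
        have hyinf : (Set.rangeFactorization fs ⁻¹' {y}).Infinite := Set.infinite_coe_iff.mp hy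
        set f := (y : X → ℝ) with hfdef
        have hfib : ∀ j ∈ Set.rangeFactorization fs ⁻¹' {y}, fs j = f := by
          intro j hj
          have h1 : Set.rangeFactorization fs j = y := hj
          exact congrArg Subtype.val h1
        obtain ⟨j0, hj0⟩ := hyinf.nonempty
        have hfF : f ∈ F (s j0) \ {h} := by
          rw [← hfib j0 hj0]
          exact hfs_mem j0
        apply hfF.2
        rw [Set.mem_singleton_iff]
        have hle : h ≤ f := by
          rw [← hfib j0 hj0]
          exact (hgeF _ _ (hfs_mem j0).1).2.1
        funext x
        have hub : ∀ k : ℕ, f x - h x < lvl k := by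
          intro k
          obtain ⟨j, hjfib, hjk⟩ := hyinf.exists_gt k
          have h2 : f x - h x < lvl (s j) := by
            rw [← hfib j hjfib]
            exact hfs_lt j x
          exact lt_of_lt_of_le h2 (lvl_antitone (le_trans (le_of_lt hjk) (hjs j)))
        have h1 : f x - h x ≤ 0 := nonpos_of_forall_lt_lvl hub
        have h2 : h x ≤ f x := hle x
        linarith
      · intro ε hε x
        apply Set.Finite.subset ((Set.finite_Iio (⌈1/ε⌉₊)).image fs)
        rintro f ⟨⟨j0, rfl⟩, hfx⟩
        refine ⟨j0, ?_, rfl⟩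
        have hle : h ≤ fs j0 := (hgeF _ _ (hfs_mem j0).1).2.1
        rw [abs_of_nonneg (sub_nonneg.mpr (hle x))] at hfx
        have hlt1 : fs j0 x - h x < lvl j0 :=
          lt_of_lt_of_le (hfs_lt j0 x) (lvl_antitone (hjs j0))
        exact lvl_bound hε (lt_of_le_of_lt hfx hlt1)
    · rw [hTr]
      rintro f ⟨j, rfl⟩
      exact ⟨(hgeF _ _ (hfs_mem j).1).2.1, (hgeF _ _ (hfs_mem j).1).2.2⟩
  · push_neg at hM
    obtain ⟨N, hN⟩ := hM
    set 𝒰 : ℕ → Set (Set X) :=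
      fun j => {S | ∃ f ∈ F (N + j) \ {h}, S = Uset h f (N + j)} with h𝒰
    have h𝒰mem : ∀ j, 𝒰 j ∈ OpenKindCovers X Φ := by
      intro j
      apply source_cover Φ hΦ h _ (hF _) (N + j)
      rintro ⟨f, hf, hflt⟩
      obtain ⟨x, hx⟩ := hN (N + j) (Nat.le_add_right N j) f hf
      exact absurd (hflt x) (not_lt.mpr hx)
    obtain ⟨𝒱, h𝒱sub, h𝒱mem⟩ := hX 𝒰 h𝒰mem
    set 𝒲 : ℕ → Set (Set X) := fun j => 𝒱 j \ ⋃ i, ⋃ _ : i < j, 𝒱 i with h𝒲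
    have h𝒲sub : ∀ j, 𝒲 j ⊆ 𝒱 j := fun j => Set.diff_subset
    have h𝒲uniq : ∀ j j' S, S ∈ 𝒲 j → S ∈ 𝒲 j' → j = j' := by
      intro j j' S hj hj'
      by_contra hne
      rcases Nat.lt_or_ge j j' with hlt | hge2
      · exact hj'.2 (Set.mem_iUnion.mpr ⟨j, Set.mem_iUnion.mpr ⟨hlt, hj.1⟩⟩)
      · have hlt : j' < j := lt_of_le_of_ne hge2 (fun e => hne e.symm)
        exact hj.2 (Set.mem_iUnion.mpr ⟨j', Set.mem_iUnion.mpr ⟨hlt, hj'.1⟩⟩)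
    have h𝒲union : (⋃ j, 𝒲 j) = ⋃ j, 𝒱 j := by
      apply Set.Subset.antisymm
      · exact Set.iUnion_mono h𝒲sub
      · intro S hS
        rcases Set.mem_iUnion.mp hS with ⟨j, hj⟩
        have hex : ∃ j, S ∈ 𝒱 j := ⟨j, hj⟩
        refine Set.mem_iUnion.mpr ⟨Nat.find hex, Nat.find_spec hex, ?_⟩
        intro hc
        rcases Set.mem_iUnion.mp hc with ⟨i, hi⟩
        rcases Set.mem_iUnion.mp hi with ⟨hlt, hmem2⟩
        exact Nat.find_min hex hlt hmem2
    obtain ⟨h𝒱open, h𝒱cov, h𝒱inf, h𝒱fin⟩ := h𝒱mem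
    have hCinf : (⋃ j, 𝒲 j).Infinite := by
      rw [h𝒲union]
      exact h𝒱inf
    have hCfin : ∀ x : X, {S | S ∈ ⋃ j, 𝒲 j ∧ x ∉ S}.Finite := by
      intro x
      rw [h𝒲union]
      exact h𝒱fin x
    have hch : ∀ j S, ∃ f, S ∈ 𝒲 j → (f ∈ F (N + j) \ {h} ∧ S = Uset h f (N + j)) := by
      intro j S
      by_cases hS : S ∈ 𝒲 j
      · obtain ⟨f, hf, he⟩ := (h𝒱sub j).1 (h𝒲sub j hS)
        exact ⟨f, fun _ => ⟨hf, he⟩⟩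
      · exact ⟨h, fun hc => absurd hc hS⟩
    choose fsel hsel using hch
    set V : ℕ → Set (X → ℝ) :=
      fun n => if hn : N ≤ n then fsel (n - N) '' 𝒲 (n - N) else ∅ with hVdef
    have hVsub : ∀ n, V n ⊆ F n \ {h} := by
      intro n f hf
      by_cases hn : N ≤ n
      · rw [hVdef] at hf
        simp only [dif_pos hn] at hf
        obtain ⟨S, hS, rfl⟩ := hf
        have h1 := (hsel _ S hS).1
        rwa [Nat.add_sub_cancel' hn] at h1
      · rw [hVdef] at hf
        simp only [dif_neg hn] at hf
        exact absurd hf (Set.notMem_empty f)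
    have hVfin : ∀ n, (V n).Finite := by
      intro n
      rw [hVdef]
      by_cases hn : N ≤ n
      · simp only [dif_pos hn]
        exact (((h𝒱sub _).2).subset (h𝒲sub _)).image _
      · simp only [dif_neg hn]
        exact Set.finite_empty
    have hTr : (⋃ n, V n) = ⋃ j, fsel j '' 𝒲 j := by
      apply Set.Subset.antisymm
      · intro f hf
        rcases Set.mem_iUnion.mp hf with ⟨n, hn⟩
        rw [hVdef] at hn
        by_cases h2 : N ≤ n
        · simp only [dif_pos h2] at hn
          exact Set.mem_iUnion.mpr ⟨n - N, hn⟩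
        · simp only [dif_neg h2] at hn
          exact absurd hn (Set.notMem_empty f)
      · intro f hf
        rcases Set.mem_iUnion.mp hf with ⟨j, hj⟩
        refine Set.mem_iUnion.mpr ⟨N + j, ?_⟩
        rw [hVdef]
        simp only [dif_pos (Nat.le_add_right N j), Nat.add_sub_cancel_left]
        exact hj
    have hmemT : ∀ f ∈ ⋃ j, fsel j '' 𝒲 j, ∃ j S, S ∈ 𝒲 j ∧ f = fsel j S ∧
        f ∈ F (N + j) \ {h} ∧ S = Uset h f (N + j) := by
      intro f hf
      rcases Set.mem_iUnion.mp hf with ⟨j, hj⟩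
      rcases hj with ⟨S, hS, rfl⟩
      exact ⟨j, S, hS, rfl, (hsel j S hS).1, (hsel j S hS).2⟩
    refine ⟨V, fun n => ⟨(hVsub n).trans Set.diff_subset, hVfin n⟩, ?_, ?_, ?_⟩
    · rw [hTr]
      intro f hf
      obtain ⟨j, S, _, _, hfF, _⟩ := hmemT f hf
      exact (hgeF _ _ hfF.1).1
    · rw [hTr]
      constructor
      · intro hTfin
        apply hCinf
        have hfibfin : ∀ f ∈ ⋃ j, fsel j '' 𝒲 j,
            {S | ∃ j, S ∈ 𝒲 j ∧ fsel j S = f}.Finite := by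
          intro f hfT
          obtain ⟨j0, S0, hS0, hfeq, hfF, hUeq0⟩ := hmemT f hfT
          by_contra hinf
          have hinf' : {S | ∃ j, S ∈ 𝒲 j ∧ fsel j S = f}.Infinite := hinf
          apply hfF.2
          rw [Set.mem_singleton_iff]
          have hle : h ≤ f := (hgeF _ _ hfF.1).2.1
          funext x
          have hub : ∀ k : ℕ, f x - h x < lvl k := by
            intro k
            have hsmall : {S | (∃ j, S ∈ 𝒲 j ∧ fsel j S = f) ∧
                ∃ j ≤ k, S = Uset h f (N + j)}.Finite := by
              apply Set.Finite.subset ((Set.finite_Iic k).image (fun j => Uset h f (N + j)))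
              rintro S ⟨_, j, hjk, rfl⟩
              exact ⟨j, hjk, rfl⟩
            have hbig : ({S | ∃ j, S ∈ 𝒲 j ∧ fsel j S = f} \
                ({S | S ∈ ⋃ j, 𝒲 j ∧ x ∉ S} ∪ {S | (∃ j, S ∈ 𝒲 j ∧ fsel j S = f) ∧
                  ∃ j ≤ k, S = Uset h f (N + j)})).Infinite :=
              hinf'.diff ((hCfin x).union hsmall)
            obtain ⟨S, hS⟩ := hbig.nonempty
            obtain ⟨⟨j, hSj, hfS⟩, hSnot⟩ := hS
            have hxS : x ∈ S := by
              by_contra hxS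
              exact hSnot (Set.mem_union_left _ ⟨Set.mem_iUnion.mpr ⟨j, hSj⟩, hxS⟩)
            have hUS : S = Uset h f (N + j) := by
              have h3 := (hsel j S hSj).2
              rwa [hfS] at h3
            have hjk : k < j := by
              by_contra hjk2
              push_neg at hjk2
              exact hSnot (Set.mem_union_right _ ⟨⟨j, hSj, hfS⟩, j, hjk2, hUS⟩)
            have hxU : x ∈ Uset h f (N + j) := hUS ▸ hxS
            rw [mem_Uset] at hxU
            exact lt_of_lt_of_le hxU
              (lvl_antitone (le_trans (le_of_lt hjk) (Nat.le_add_left j N)))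
          have h1 : f x - h x ≤ 0 := nonpos_of_forall_lt_lvl hub
          have h2 : h x ≤ f x := hle x
          linarith
        apply Set.Finite.subset (hTfin.biUnion hfibfin)
        intro S hS
        rcases Set.mem_iUnion.mp hS with ⟨j, hSj⟩
        exact Set.mem_biUnion (Set.mem_iUnion.mpr ⟨j, Set.mem_image_of_mem _ hSj⟩)
          ⟨j, hSj, rfl⟩
      · intro ε hε x
        have hBfin := hCfin x
        have hpart1 : (⋃ j ∈ Set.Iio (⌈1/ε⌉₊), fsel j '' 𝒲 j).Finite :=
          (Set.finite_Iio _).biUnion (fun j _ => (((h𝒱sub j).2).subset (h𝒲sub j)).image _)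
        have hpart2 : (⋃ S ∈ {S | S ∈ ⋃ j, 𝒲 j ∧ x ∉ S},
            {g | ∃ j, S ∈ 𝒲 j ∧ g = fsel j S}).Finite := by
          apply hBfin.biUnion
          intro S hS
          apply Set.Subsingleton.finite
          rintro g1 ⟨j1, hj1, rfl⟩ g2 ⟨j2, hj2, rfl⟩
          rw [h𝒲uniq j1 j2 S hj1 hj2]
        apply Set.Finite.subset (hpart1.union hpart2)
        rintro f ⟨hfT, hfx⟩
        obtain ⟨j, S, hSj, hfeq, hfF, hUeq⟩ := hmemT f hfT
        have hle : h ≤ f := (hgeF _ _ hfF.1).2.1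
        rw [abs_of_nonneg (sub_nonneg.mpr (hle x))] at hfx
        by_cases hxS : x ∈ S
        · left
          have hxU : x ∈ Uset h f (N + j) := hUeq ▸ hxS
          rw [mem_Uset] at hxU
          have hεlt : ε < lvl j :=
            lt_of_le_of_lt hfx (lt_of_lt_of_le hxU (lvl_antitone (Nat.le_add_left j N)))
          exact Set.mem_biUnion (Set.mem_Iio.mpr (lvl_bound hε hεlt)) ⟨S, hSj, hfeq.symm⟩
        · right
          exact Set.mem_biUnion (⟨Set.mem_iUnion.mpr ⟨j, hSj⟩, hxS⟩ :
            S ∈ {S | S ∈ ⋃ j, 𝒲 j ∧ x ∉ S}) ⟨j, hSj, hfeq⟩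
    · rw [hTr]
      intro f hf
      obtain ⟨j, S, _, _, hfF, _⟩ := hmemT f hf
      exact ⟨(hgeF _ _ hfF.1).2.1, (hgeF _ _ hfF.1).2.2⟩

end MP

/-- For Φ ∈ {Ω, Γ}, Ψ ∈ {𝒪, Ω, Γ} with ⟨Φ,Ψ⟩ ≠ ⟨Ω,𝒪⟩ (or, alternatively,
with X possessing property (ε)), and X an infinite Hausdorff space:
X is an S_fin(Φ,Ψ)-space iff for every h ∈ USC*_p(X) the family USC*_p(X) satisfies
the selection principle S_fin(Φ_h,Ψ_h). -/
theorem statement1 {X : Type*} [TopologicalSpace X] [T2Space X] [Infinite X]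
    (Φ Ψ : CoverKind) (hΦ : Φ = CoverKind.omega ∨ Φ = CoverKind.gamma)
    (hpair : ¬(Φ = CoverKind.omega ∧ Ψ = CoverKind.o) ∨ PropEps X) :
    Sfin (OpenKindCovers X Φ) (OpenKindCovers X Ψ) ↔
      ∀ h ∈ USCb X, Sfin (PhiH Φ h (USCb X)) (PhiH Ψ h (USCb X)) := by
  constructor
  · intro hX h _
    cases Ψ with
    | o => exact mp_o_omega Φ CoverKind.o hΦ (Or.inl rfl) h hX
    | omega => exact mp_o_omega Φ CoverKind.omega hΦ (Or.inr rfl) h hX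
    | gamma => exact mp_gamma Φ hΦ h hX
  · exact mpr_lemma Φ Ψ hΦ

end Selectors
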